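/- For every positive integer n, the sum over 4-tuples (a,b,c,d) with 1 ≤ a ≤ n+1, 2 ≤ b ≤ n+1, and 1 ≤ d ≤ c ≤ n of q^{(a-1)+(b-1)+(c-1)+(d-1)} equals (q + q^2) times the square of the q-binomial coefficient [n+1 choose 2]_q. -/

import Mathlib

/-- The field of rational functions in q over ℚ. -/
noncomputable def q : RatFunc ℚ := RatFunc.X

/-- The q-analogue [m]_q = 1 + q + ... + q^{m-1}. -/
noncomputable def qa (m : ℕ) : RatFunc ℚ := ∑ j ∈ Finset.range m, q ^ j

lemma one_add_q_ne : (1 + q : RatFunc ℚ) ≠ 0 := by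
  have : (1 + q : RatFunc ℚ) = algebraMap (Polynomial ℚ) (RatFunc ℚ) (1 + Polynomial.X) := by
    simp [q, RatFunc.algebraMap_X, map_add]
  rw [this]
  apply RatFunc.algebraMap_ne_zero
  intro h
  have := congrArg (Polynomial.coeff · 0) h
  simp at this

lemma sumA (m : ℕ) : ∑ a ∈ Finset.Icc 1 m, q ^ (a - 1) = qa m := by
  induction m with
  | zero => simp [qa]
  | succ m ih =>
    rw [Finset.sum_Icc_succ_top (Nat.succ_le_succ (Nat.zero_le m)), ih]
    simp [qa, Finset.sum_range_succ]

lemma sumB (n : ℕ) : ∑ b ∈ Finset.Icc 2 (n + 1), q ^ (b - 1) = q * qa n := by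
  induction n with
  | zero => simp [qa]
  | succ n ih =>
    rw [Finset.sum_Icc_succ_top (by omega), ih]
    simp [qa, Finset.sum_range_succ]
    ring

lemma triangle (n : ℕ) :
    (1 + q) * ∑ c ∈ Finset.Icc 1 n, q ^ (c - 1) * qa c = qa (n + 1) * qa n := by
  induction n with
  | zero => simp [qa]
  | succ n ih =>
    rw [Finset.sum_Icc_succ_top (Nat.succ_le_succ (Nat.zero_le n)), mul_add, ih]
    have h1 : qa (n + 2) = qa n + q ^ n + q ^ (n + 1) := by
      simp [qa, Finset.sum_range_succ]
    have h2 : qa (n + 1) = qa n + q ^ n := by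
      simp [qa, Finset.sum_range_succ]
    simp only [Nat.add_sub_cancel, h1, h2]
    ring

theorem taxicab_qcount_rect_triangle (n : ℕ) (hn : 0 < n) :
    (∑ p ∈ (Finset.Icc 1 (n + 1) ×ˢ Finset.Icc 2 (n + 1) ×ˢ
              Finset.Icc 1 n ×ˢ Finset.Icc 1 n).filter
        (fun p : ℕ × ℕ × ℕ × ℕ => p.2.2.2 ≤ p.2.2.1),
        q ^ ((p.1 - 1) + (p.2.1 - 1) + (p.2.2.1 - 1) + (p.2.2.2 - 1)))
      = (q + q ^ 2) * (qa (n + 1) * qa n / (1 + q)) ^ 2 := by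
  have key : (∑ p ∈ (Finset.Icc 1 (n + 1) ×ˢ Finset.Icc 2 (n + 1) ×ˢ
              Finset.Icc 1 n ×ˢ Finset.Icc 1 n).filter
        (fun p : ℕ × ℕ × ℕ × ℕ => p.2.2.2 ≤ p.2.2.1),
        q ^ ((p.1 - 1) + (p.2.1 - 1) + (p.2.2.1 - 1) + (p.2.2.2 - 1)))
      = (∑ a ∈ Finset.Icc 1 (n+1), q ^ (a-1)) * ((∑ b ∈ Finset.Icc 2 (n+1), q ^ (b-1)) *
         ∑ c ∈ Finset.Icc 1 n, q ^ (c-1) * ∑ d ∈ Finset.Icc 1 c, q ^ (d-1)) := by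
    rw [Finset.sum_filter, Finset.sum_product, Finset.sum_mul]
    refine Finset.sum_congr rfl fun a _ => ?_
    rw [Finset.sum_product, Finset.sum_mul, Finset.mul_sum]
    refine Finset.sum_congr rfl fun b _ => ?_
    rw [Finset.sum_product, Finset.mul_sum, Finset.mul_sum]
    refine Finset.sum_congr rfl fun c hc => ?_
    simp only [Finset.mem_Icc] at hc
    have hsub : (Finset.Icc 1 n).filter (· ≤ c) = Finset.Icc 1 c := by
      ext x; simp only [Finset.mem_filter, Finset.mem_Icc]; omega
    calc (∑ d ∈ Finset.Icc 1 n, if d ≤ c then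
            q ^ ((a - 1) + (b - 1) + (c - 1) + (d - 1)) else 0)
        = ∑ d ∈ (Finset.Icc 1 n).filter (· ≤ c),
            q ^ ((a - 1) + (b - 1) + (c - 1) + (d - 1)) := (Finset.sum_filter _ _).symm
      _ = ∑ d ∈ Finset.Icc 1 c, q ^ ((a - 1) + (b - 1) + (c - 1) + (d - 1)) := by rw [hsub]
      _ = q ^ (a-1) * (q ^ (b-1) * (q ^ (c-1) * ∑ d ∈ Finset.Icc 1 c, q ^ (d-1))) := by
          rw [Finset.mul_sum, Finset.mul_sum, Finset.mul_sum]
          exact Finset.sum_congr rfl fun d _ => by rw [pow_add, pow_add, pow_add]; ring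
  have hinner : ∀ c, (∑ d ∈ Finset.Icc 1 c, q ^ (d-1)) = qa c := fun c => sumA c
  simp only [hinner] at key
  rw [key, sumB]
  have hT := triangle n
  set T := ∑ c ∈ Finset.Icc 1 n, q ^ (c - 1) * qa c with hTdef
  apply mul_left_cancel₀ (pow_ne_zero 2 one_add_q_ne)
  have hr : (1+q)^2 * ((q + q^2) * (qa (n+1) * qa n / (1 + q)) ^ 2)
      = (q + q^2) * (qa (n+1) * qa n) ^ 2 := by
    rw [div_pow]
    field_simp
  rw [hr]
  linear_combination (q * (1+q) * qa (n+1) * qa n) * hT
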